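/- Let q = p + p²/N and μ satisfying μ a^{p²/N} < q/(p C^q), where C is the Gagliardo–Nirenberg constant. If u is on the L^p sphere S_a and satisfies ‖∇u‖_p^p = μγ_q‖u‖_q^q + ‖u‖_{p^*}^{p^*} with the GN inequality ‖u‖_q^q ≤ C^q ‖∇u‖_p^{qγ_q} a^{q(1−γ_q)} and Sobolev ‖u‖_{p^*}^{p^*} ≤ S^{−p^*/p}‖∇u‖_p^{p^*}, then ‖∇u‖_p^p ≥ ((1 − (p/q)C^q μ a^{p²/N}) S^{p^*/p})^{p/(p^*−p)} > 0; moreover the energy E = (1/N)‖∇u‖_p^p − (pμ)/(Nq)‖u‖_q^q satisfies E ≥ (1/N)(1 − (p/q)C^q μ a^{p²/N})‖∇u‖_p^p > 0. -/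

import Mathlib

/-- Lower bounds on the gradient norm and the energy on the Pohozaev manifold in the
`L^p`-critical case `q = p + p²/N`, under `μ a^{p²/N} < q/(pC^q)`, the Gagliardo–Nirenberg
inequality and the Sobolev inequality. -/
theorem stmt_15 (N p a μ C S G Q P q γ pstar : ℝ)
    (hp : 1 < p) (hpN : p < N) (ha : 0 < a) (hμ : 0 < μ) (hC : 0 < C) (hS : 0 < S)
    (hq : q = p + p ^ 2 / N) (hγ : γ = N * (q - p) / (p * q)) (hps : pstar = N * p / (N - p))
    (hQ : 0 ≤ Q) (hP : 0 < P)
    (hmu : μ * a ^ (p ^ 2 / N) < q / (p * C ^ q))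
    (heq : G = μ * γ * Q + P)
    (hGN : Q ≤ C ^ q * G ^ (q * γ / p) * a ^ (q * (1 - γ)))
    (hsob : P ≤ S ^ (-(pstar / p)) * G ^ (pstar / p)) :
    ((1 - (p / q) * C ^ q * μ * a ^ (p ^ 2 / N)) * S ^ (pstar / p)) ^ (p / (pstar - p)) ≤ G ∧
    0 < ((1 - (p / q) * C ^ q * μ * a ^ (p ^ 2 / N)) * S ^ (pstar / p)) ^ (p / (pstar - p)) ∧
    (1 / N) * (1 - (p / q) * C ^ q * μ * a ^ (p ^ 2 / N)) * G ≤
      (1 / N) * G - (p * μ / (N * q)) * Q ∧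
    0 < (1 / N) * G - (p * μ / (N * q)) * Q := by
  have hp0 : 0 < p := by linarith
  have hN0 : 0 < N := by linarith
  have hNp : 0 < N - p := by linarith
  have hq0 : 0 < q := by rw [hq]; positivity
  have hqp : p < q := by
    have : 0 < p ^ 2 / N := by positivity
    rw [hq]; linarith
  have hγval : γ = p / q := by
    rw [hγ, hq]; field_simp; ring
  have hG : 0 < G := by
    have h0 : 0 ≤ μ * γ * Q := by
      apply mul_nonneg (mul_nonneg hμ.le _) hQ
      rw [hγval]; positivity
    rw [heq]; linarith
  have hCq : 0 < C ^ q := Real.rpow_pos_of_pos hC q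
  have haq : 0 < a ^ (p ^ 2 / N) := Real.rpow_pos_of_pos ha _
  set K := 1 - p / q * C ^ q * μ * a ^ (p ^ 2 / N) with hKdef
  have hK : 0 < K := by
    have hpc : 0 < p * C ^ q := by positivity
    have h1 : μ * a ^ (p ^ 2 / N) * (p * C ^ q) < q := (lt_div_iff₀ hpc).mp hmu
    have h2 : p / q * C ^ q * μ * a ^ (p ^ 2 / N)
        = μ * a ^ (p ^ 2 / N) * (p * C ^ q) / q := by ring
    rw [hKdef, sub_pos, h2, div_lt_one hq0]
    exact h1
  -- simplify GN exponents
  have hGNe : q * γ / p = 1 := by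
    rw [hγval]; field_simp
  have hGNe2 : q * (1 - γ) = p ^ 2 / N := by
    have h1 : q * (1 - γ) = q - p := by rw [hγval]; field_simp
    rw [h1, hq]; ring
  have hGN' : Q ≤ C ^ q * G * a ^ (p ^ 2 / N) := by
    rw [hGNe, hGNe2, Real.rpow_one] at hGN; exact hGN
  have h2 : μ * (p / q) * Q ≤ (p / q * C ^ q * μ * a ^ (p ^ 2 / N)) * G := by
    calc μ * (p / q) * Q ≤ μ * (p / q) * (C ^ q * G * a ^ (p ^ 2 / N)) := by
          apply mul_le_mul_of_nonneg_left hGN' (by positivity)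
      _ = (p / q * C ^ q * μ * a ^ (p ^ 2 / N)) * G := by ring
  have hKG : K * G ≤ P := by
    have hKGid : K * G = G - p / q * C ^ q * μ * a ^ (p ^ 2 / N) * G := by
      rw [hKdef]; ring
    have hPid : P = G - μ * γ * Q := by linarith [heq]
    rw [hKGid, hPid, hγval]
    linarith [h2]
  have hps_p : 0 < pstar - p := by
    have : pstar - p = p ^ 2 / (N - p) := by
      rw [hps]; field_simp; ring
    rw [this]; positivity
  have hSe : 0 < S ^ (pstar / p) := Real.rpow_pos_of_pos hS _
  have h3 : K * G * S ^ (pstar / p) ≤ G ^ (pstar / p) := by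
    have hks : K * G ≤ S ^ (-(pstar / p)) * G ^ (pstar / p) := hKG.trans hsob
    rw [Real.rpow_neg hS.le] at hks
    calc K * G * S ^ (pstar / p)
        ≤ (S ^ (pstar / p))⁻¹ * G ^ (pstar / p) * S ^ (pstar / p) :=
          mul_le_mul_of_nonneg_right hks hSe.le
      _ = G ^ (pstar / p) := by field_simp
  have h4 : K * S ^ (pstar / p) ≤ G ^ ((pstar - p) / p) := by
    have he : (pstar - p) / p = pstar / p - 1 := by field_simp
    rw [he, Real.rpow_sub hG, Real.rpow_one, le_div_iff₀ hG]
    calc K * S ^ (pstar / p) * G = K * G * S ^ (pstar / p) := by ring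
      _ ≤ G ^ (pstar / p) := h3
  have hKS : 0 < K * S ^ (pstar / p) := mul_pos hK hSe
  have h5 : (K * S ^ (pstar / p)) ^ (p / (pstar - p)) ≤ G := by
    have hmono := Real.rpow_le_rpow hKS.le h4
      (by positivity : (0:ℝ) ≤ p / (pstar - p))
    rw [← Real.rpow_mul hG.le] at hmono
    have hexp : (pstar - p) / p * (p / (pstar - p)) = 1 := by
      field_simp
    rwa [hexp, Real.rpow_one] at hmono
  have h6 : 0 < (K * S ^ (pstar / p)) ^ (p / (pstar - p)) :=
    Real.rpow_pos_of_pos hKS _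
  have hc3 : 1 / N * K * G ≤ 1 / N * G - p * μ / (N * q) * Q := by
    have hh : p * μ / (N * q) * Q = 1 / N * (μ * (p / q) * Q) := by
      field_simp
    have hh2 : 1 / N * K * G
        = 1 / N * G - 1 / N * ((p / q * C ^ q * μ * a ^ (p ^ 2 / N)) * G) := by
      rw [hKdef]; ring
    have := mul_le_mul_of_nonneg_left h2 (by positivity : (0:ℝ) ≤ 1 / N)
    rw [hh, hh2]
    linarith
  have hc4 : 0 < 1 / N * G - p * μ / (N * q) * Q :=
    lt_of_lt_of_le (mul_pos (mul_pos (by positivity) hK) hG) hc3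
  exact ⟨h5, h6, hc3, hc4⟩
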